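/- arXiv:2308.11363 — 3 statements merged into one kernel-verified Lean document; each statement's English description precedes it below -/
import Mathlib

section
/- Let f : [0,∞) → [0,∞) be measurable, set f_0 := f, and for n ≥ 1 define the n-fold repeated tail f_n(x) := ∫_x^∞ ∫_{s_1}^∞ … ∫_{s_{n-1}}^∞ f(s_n) ds_n … ds_2 ds_1. Then for every n ≥ 1 and every q ≥ 0, with both sides valued in [0,∞] (in the extended sense ∞ = ∞), ∫_0^∞ e^{−qx} f_n(x) dx = (1/(n−1)!) ∫_0^1 (1−v)^{n−1} ( ∫_0^∞ t^n e^{−qvt} f(t) dt ) dv; equivalently, writing f̂ for the Laplace transform of f and using that its n-th derivative is f̂^{(n)}(x) = (−1)^n ∫_0^∞ t^n e^{−xt} f(t) dt, one has f̂_n(q) = ((−1)^n/(n−1)!) ∫_0^1 f̂^{(n)}(qv)(1−v)^{n−1} dv. -/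
open MeasureTheory Set Real
open scoped ENNReal

/-- The `n`-fold repeated tail of `f`: `repeatedTail f 0 = f` and
`repeatedTail f (n+1) x = ∫_x^∞ repeatedTail f n (s) ds`. -/
noncomputable def repeatedTail (f : ℝ → ℝ≥0∞) : ℕ → ℝ → ℝ≥0∞
  | 0 => f
  | n + 1 => fun x => ∫⁻ s in Set.Ioi x, repeatedTail f n s

lemma lint_Ioo {a b : ℝ} (hab : a ≤ b) {g : ℝ → ℝ} (hg : Continuous g)
    (hpos : ∀ s ∈ Ioo a b, 0 ≤ g s) :
    ∫⁻ s in Ioo a b, ENNReal.ofReal (g s) = ENNReal.ofReal (∫ s in a..b, g s) := by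
  rw [intervalIntegral.integral_of_le hab, integral_Ioc_eq_integral_Ioo,
    ofReal_integral_eq_lintegral_ofReal ((hg.integrableOn_Icc).mono_set Ioo_subset_Icc_self)]
  filter_upwards [ae_restrict_mem measurableSet_Ioo] with s hs using hpos s hs

lemma swap_aux {g : ℝ → ℝ → ℝ≥0∞} (hg : Measurable fun p : ℝ × ℝ => g p.1 p.2) (a : ℝ) :
    ∫⁻ x in Ioi a, ∫⁻ t in Ioi x, g x t = ∫⁻ t in Ioi a, ∫⁻ x in Ioo a t, g x t := by
  have hF : Measurable fun p : ℝ × ℝ => if p.1 < p.2 then g p.1 p.2 else 0 :=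
    Measurable.ite (measurableSet_lt measurable_fst measurable_snd) hg measurable_const
  have h2 : ∀ t : ℝ, (∫⁻ x in Ioi a, (if x < t then g x t else 0))
      = ∫⁻ x in Ioo a t, g x t := by
    intro t
    have : ∀ x : ℝ, (if x < t then g x t else 0) = (Iio t).indicator (fun x => g x t) x := by
      intro x; simp [indicator, mem_Iio]
    simp_rw [this]
    rw [lintegral_indicator measurableSet_Iio]
    rw [Measure.restrict_restrict measurableSet_Iio, inter_comm, Ioi_inter_Iio]
  calc ∫⁻ x in Ioi a, ∫⁻ t in Ioi x, g x t
      = ∫⁻ x in Ioi a, ∫⁻ t, (if x < t then g x t else 0) := by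
        refine lintegral_congr fun x => ?_
        rw [← lintegral_indicator measurableSet_Ioi]
        refine lintegral_congr fun t => ?_
        simp [indicator, mem_Ioi]
    _ = ∫⁻ t, ∫⁻ x in Ioi a, (if x < t then g x t else 0) :=
        lintegral_lintegral_swap hF.aemeasurable
    _ = ∫⁻ t, (Ioi a).indicator (fun t => ∫⁻ x in Ioo a t, g x t) t := by
        refine lintegral_congr fun t => ?_
        rw [h2 t]
        by_cases ht : a < t
        · rw [indicator_of_mem (mem_Ioi.2 ht)]
        · rw [indicator_of_notMem (by simpa [mem_Ioi] using ht), Ioo_eq_empty ht,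
            Measure.restrict_empty, lintegral_zero_measure]
    _ = ∫⁻ t in Ioi a, ∫⁻ x in Ioo a t, g x t := lintegral_indicator measurableSet_Ioi _

lemma lint_pow_Ioo (n : ℕ) {x t : ℝ} (h : x < t) :
    ∫⁻ s in Ioo x t, ENNReal.ofReal ((t - s) ^ n)
      = ENNReal.ofReal ((t - x) ^ (n + 1) / (n + 1)) := by
  rw [lint_Ioo (g := fun s => (t - s) ^ n) h.le (by fun_prop)
    (fun s hs => pow_nonneg (by linarith [hs.2]) n)]
  congr 1
  have h1 := intervalIntegral.integral_comp_sub_left (a := x) (b := t) (fun u => u ^ n) t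
  rw [h1, sub_self, integral_pow, zero_pow (Nat.succ_ne_zero n), sub_zero]

lemma tail_eq (f : ℝ → ℝ≥0∞) (hf : Measurable f) :
    ∀ (n : ℕ) (x : ℝ), repeatedTail f (n + 1) x
      = ((Nat.factorial n : ℝ≥0∞))⁻¹ * ∫⁻ t in Ioi x, ENNReal.ofReal ((t - x) ^ n) * f t := by
  intro n
  induction n with
  | zero =>
    intro x
    simp [repeatedTail]
  | succ n ih =>
    intro x
    have hfac : ((Nat.factorial n : ℝ≥0∞))⁻¹ ≠ ⊤ := by
      simp [Nat.factorial_ne_zero]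
    have hg : Measurable fun p : ℝ × ℝ => ENNReal.ofReal ((p.2 - p.1) ^ n) * f p.2 :=
      ((measurable_snd.sub measurable_fst).pow_const n).ennreal_ofReal.mul
        (hf.comp measurable_snd)
    have hinv : ((n + 1 : ℕ) : ℝ≥0∞)⁻¹ ≠ ⊤ := by simp
    calc repeatedTail f (n + 2) x
        = ∫⁻ s in Ioi x, repeatedTail f (n + 1) s := rfl
      _ = ∫⁻ s in Ioi x, ((Nat.factorial n : ℝ≥0∞))⁻¹ *
            ∫⁻ t in Ioi s, ENNReal.ofReal ((t - s) ^ n) * f t :=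
          lintegral_congr fun s => ih s
      _ = ((Nat.factorial n : ℝ≥0∞))⁻¹ *
            ∫⁻ s in Ioi x, ∫⁻ t in Ioi s, ENNReal.ofReal ((t - s) ^ n) * f t :=
          lintegral_const_mul' _ _ hfac
      _ = ((Nat.factorial n : ℝ≥0∞))⁻¹ *
            ∫⁻ t in Ioi x, ∫⁻ s in Ioo x t, ENNReal.ofReal ((t - s) ^ n) * f t := by
          rw [swap_aux hg x]
      _ = ((Nat.factorial n : ℝ≥0∞))⁻¹ *
            ∫⁻ t in Ioi x, ((n + 1 : ℕ) : ℝ≥0∞)⁻¹ *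
              (ENNReal.ofReal ((t - x) ^ (n + 1)) * f t) := by
          congr 1
          refine setLIntegral_congr_fun measurableSet_Ioi ?_
          intro t ht
          beta_reduce
          rw [lintegral_mul_const (f := fun s => ENNReal.ofReal ((t - s) ^ n)) _ (by fun_prop),
            lint_pow_Ioo n ht, ENNReal.ofReal_div_of_pos (by positivity)]
          have : ENNReal.ofReal ((n : ℝ) + 1) = ((n + 1 : ℕ) : ℝ≥0∞) := by
            exact_mod_cast ENNReal.ofReal_natCast (n + 1)
          rw [this, div_eq_mul_inv, mul_comm (ENNReal.ofReal _) _, mul_assoc]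
      _ = ((Nat.factorial (n + 1) : ℝ≥0∞))⁻¹ *
            ∫⁻ t in Ioi x, ENNReal.ofReal ((t - x) ^ (n + 1)) * f t := by
          rw [lintegral_const_mul' _ _ hinv, ← mul_assoc]
          congr 1
          rw [Nat.factorial_succ]
          push_cast
          rw [ENNReal.mul_inv (Or.inl (by simp)) (Or.inl (by simp))]
          ring

lemma key2 (m : ℕ) {q t : ℝ} (hq : 0 ≤ q) (ht : 0 < t) :
    ∫⁻ x in Ioo 0 t, ENNReal.ofReal (Real.exp (-q * x) * (t - x) ^ m)
      = ∫⁻ v in Ioo 0 1, ENNReal.ofReal ((1 - v) ^ m * (t ^ (m + 1) * Real.exp (-(q * v) * t))) := by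
  have cont1 : Continuous fun x : ℝ => Real.exp (-q * x) * (t - x) ^ m := by
    continuity
  have cont2 : Continuous fun v : ℝ => (1 - v) ^ m * (t ^ (m + 1) * Real.exp (-(q * v) * t)) := by
    continuity
  rw [lint_Ioo ht.le cont1
      (fun x hx => mul_nonneg (Real.exp_nonneg _) (pow_nonneg (by linarith [hx.2]) m)),
    lint_Ioo zero_le_one cont2
      (fun v hv => mul_nonneg (pow_nonneg (by linarith [hv.2]) m)
        (mul_nonneg (pow_nonneg ht.le _) (Real.exp_nonneg _)))]
  congr 1
  have hpt : ∀ v : ℝ, (1 - v) ^ m * (t ^ (m + 1) * Real.exp (-(q * v) * t))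
      = Real.exp (-q * (v * t)) * (t - v * t) ^ m * t := by
    intro v
    have h1 : -(q * v) * t = -q * (v * t) := by ring
    have h2 : t - v * t = (1 - v) * t := by ring
    rw [h1, h2, mul_pow, pow_succ]
    ring
  have hsub := intervalIntegral.integral_comp_mul_right (a := 0) (b := 1)
    (fun x => Real.exp (-q * x) * (t - x) ^ m * t) ht.ne'
  calc ∫ x in (0:ℝ)..t, Real.exp (-q * x) * (t - x) ^ m
      = t⁻¹ • ∫ x in (0:ℝ)*t..(1:ℝ)*t, Real.exp (-q * x) * (t - x) ^ m * t := by
        rw [zero_mul, one_mul, intervalIntegral.integral_mul_const, smul_eq_mul,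
          mul_comm (∫ x in (0:ℝ)..t, Real.exp (-q * x) * (t - x) ^ m) t, ← mul_assoc,
          inv_mul_cancel₀ ht.ne', one_mul]
    _ = ∫ v in (0:ℝ)..1, Real.exp (-q * (v * t)) * (t - v * t) ^ m * t := hsub.symm
    _ = ∫ v in (0:ℝ)..1, (1 - v) ^ m * (t ^ (m + 1) * Real.exp (-(q * v) * t)) :=
        intervalIntegral.integral_congr fun v _ => (hpt v).symm

/-- For measurable `f : [0,∞) → [0,∞]` and every `n ≥ 1`, `q ≥ 0`,
`∫_0^∞ e^{-qx} f_n(x) dx = (1/(n-1)!) ∫_0^1 (1-v)^{n-1} (∫_0^∞ t^n e^{-qvt} f(t) dt) dv`,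
both sides valued in `[0,∞]`. -/
theorem laplace_repeatedTail (f : ℝ → ℝ≥0∞) (hf : Measurable f)
    (n : ℕ) (hn : 1 ≤ n) (q : ℝ) (hq : 0 ≤ q) :
    (∫⁻ x in Set.Ioi (0 : ℝ), ENNReal.ofReal (Real.exp (-q * x)) * repeatedTail f n x)
      = ((Nat.factorial (n - 1) : ℝ≥0∞))⁻¹ *
        ∫⁻ v in Set.Ioo (0 : ℝ) 1, ENNReal.ofReal ((1 - v) ^ (n - 1)) *
          ∫⁻ t in Set.Ioi (0 : ℝ), ENNReal.ofReal (t ^ n * Real.exp (-(q * v) * t)) * f t := by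
  obtain ⟨m, rfl⟩ : ∃ m, n = m + 1 := ⟨n - 1, (Nat.succ_pred_eq_of_pos hn).symm⟩
  simp only [Nat.add_sub_cancel]
  have hfac : ((Nat.factorial m : ℝ≥0∞))⁻¹ ≠ ⊤ := by simp [Nat.factorial_ne_zero]
  -- LHS
  have hgL : Measurable fun p : ℝ × ℝ =>
      ENNReal.ofReal (Real.exp (-q * p.1)) * (ENNReal.ofReal ((p.2 - p.1) ^ m) * f p.2) :=
    ((measurable_fst.const_mul (-q)).exp.ennreal_ofReal).mul
      (((measurable_snd.sub measurable_fst).pow_const m).ennreal_ofReal.mul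
        (hf.comp measurable_snd))
  have hL : (∫⁻ x in Ioi (0:ℝ), ENNReal.ofReal (Real.exp (-q * x)) * repeatedTail f (m + 1) x)
      = ((Nat.factorial m : ℝ≥0∞))⁻¹ *
        ∫⁻ t in Ioi (0:ℝ),
          (∫⁻ x in Ioo 0 t, ENNReal.ofReal (Real.exp (-q * x) * (t - x) ^ m)) * f t := by
    calc (∫⁻ x in Ioi (0:ℝ), ENNReal.ofReal (Real.exp (-q * x)) * repeatedTail f (m + 1) x)
        = ∫⁻ x in Ioi (0:ℝ), ((Nat.factorial m : ℝ≥0∞))⁻¹ *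
            ∫⁻ t in Ioi x, ENNReal.ofReal (Real.exp (-q * x)) *
              (ENNReal.ofReal ((t - x) ^ m) * f t) := by
          refine lintegral_congr fun x => ?_
          rw [tail_eq f hf m x, mul_left_comm,
            ← lintegral_const_mul' _ _ ENNReal.ofReal_ne_top]
      _ = ((Nat.factorial m : ℝ≥0∞))⁻¹ * ∫⁻ x in Ioi (0:ℝ),
            ∫⁻ t in Ioi x, ENNReal.ofReal (Real.exp (-q * x)) *
              (ENNReal.ofReal ((t - x) ^ m) * f t) := lintegral_const_mul' _ _ hfac
      _ = ((Nat.factorial m : ℝ≥0∞))⁻¹ * ∫⁻ t in Ioi (0:ℝ),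
            ∫⁻ x in Ioo 0 t, ENNReal.ofReal (Real.exp (-q * x)) *
              (ENNReal.ofReal ((t - x) ^ m) * f t) := by rw [swap_aux hgL 0]
      _ = ((Nat.factorial m : ℝ≥0∞))⁻¹ * ∫⁻ t in Ioi (0:ℝ),
            (∫⁻ x in Ioo 0 t, ENNReal.ofReal (Real.exp (-q * x) * (t - x) ^ m)) * f t := by
          congr 1
          refine lintegral_congr fun t => ?_
          rw [← lintegral_mul_const
            (f := fun x => ENNReal.ofReal (Real.exp (-q * x) * (t - x) ^ m)) _ (by fun_prop)]
          refine lintegral_congr fun x => ?_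
          rw [ENNReal.ofReal_mul (Real.exp_nonneg _), mul_assoc]
  rw [hL]
  -- RHS
  have hgR : Measurable fun p : ℝ × ℝ =>
      ENNReal.ofReal ((1 - p.1) ^ m) *
        (ENNReal.ofReal (p.2 ^ (m + 1) * Real.exp (-(q * p.1) * p.2)) * f p.2) :=
    ((measurable_const.sub measurable_fst).pow_const m).ennreal_ofReal.mul
      (((measurable_snd.pow_const (m + 1)).mul
        (((measurable_fst.const_mul q).neg.mul measurable_snd).exp)).ennreal_ofReal.mul
        (hf.comp measurable_snd))
  have hR : (∫⁻ v in Ioo (0:ℝ) 1, ENNReal.ofReal ((1 - v) ^ m) *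
        ∫⁻ t in Ioi (0:ℝ), ENNReal.ofReal (t ^ (m + 1) * Real.exp (-(q * v) * t)) * f t)
      = ∫⁻ t in Ioi (0:ℝ),
          (∫⁻ v in Ioo 0 1,
            ENNReal.ofReal ((1 - v) ^ m * (t ^ (m + 1) * Real.exp (-(q * v) * t)))) * f t := by
    calc (∫⁻ v in Ioo (0:ℝ) 1, ENNReal.ofReal ((1 - v) ^ m) *
          ∫⁻ t in Ioi (0:ℝ), ENNReal.ofReal (t ^ (m + 1) * Real.exp (-(q * v) * t)) * f t)
        = ∫⁻ v in Ioo (0:ℝ) 1, ∫⁻ t in Ioi (0:ℝ), ENNReal.ofReal ((1 - v) ^ m) *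
            (ENNReal.ofReal (t ^ (m + 1) * Real.exp (-(q * v) * t)) * f t) :=
          lintegral_congr fun v => (lintegral_const_mul' _ _ ENNReal.ofReal_ne_top).symm
      _ = ∫⁻ t in Ioi (0:ℝ), ∫⁻ v in Ioo (0:ℝ) 1, ENNReal.ofReal ((1 - v) ^ m) *
            (ENNReal.ofReal (t ^ (m + 1) * Real.exp (-(q * v) * t)) * f t) :=
          lintegral_lintegral_swap hgR.aemeasurable
      _ = ∫⁻ t in Ioi (0:ℝ),
            (∫⁻ v in Ioo 0 1,
              ENNReal.ofReal ((1 - v) ^ m * (t ^ (m + 1) * Real.exp (-(q * v) * t)))) * f t := by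
          refine lintegral_congr fun t => ?_
          rw [← lintegral_mul_const
            (f := fun v => ENNReal.ofReal ((1 - v) ^ m * (t ^ (m + 1) * Real.exp (-(q * v) * t))))
            _ (by fun_prop)]
          refine setLIntegral_congr_fun measurableSet_Ioo
            (fun v hv => ?_)
          rw [ENNReal.ofReal_mul (pow_nonneg (by linarith [hv.2]) m), mul_assoc]
  rw [hR]
  congr 1
  refine setLIntegral_congr_fun measurableSet_Ioi (fun t ht => ?_)
  rw [key2 m hq ht]
end

section
/- Let n ≥ 1 be an integer, β ∈ (−1, 0], and let f : (0,∞) → (0,∞) be measurable, locally integrable on (0,1], and regularly varying at 0 with index β, i.e. for every λ > 0, lim_{q→0+} f(λq)/f(q) = λ^β. Then lim_{q→0+} ( ∫_0^1 f(qv)(1−v)^{n−1} dv ) / f(q) = ∫_0^1 v^β (1−v)^{n−1} dv = Γ(n)Γ(β+1)/Γ(n+β+1). -/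
open MeasureTheory Set Filter Real
open scoped Topology

lemma small_bad (φ : ℝ → ℝ → ℝ) (hm : ∀ t, Measurable (φ t))
    (hl : ∀ u ∈ Icc (0:ℝ) 2, Tendsto (fun t => φ t u) atTop (𝓝 0))
    {ε δ : ℝ} (hε : 0 < ε) (hδ : 0 < δ) :
    ∀ᶠ t in (atTop : Filter ℝ),
      volume ({u | ε ≤ |φ t u|} ∩ Icc (0:ℝ) 2) < ENNReal.ofReal δ := by
  rw [eventually_iff_seq_eventually]
  intro x hx
  have h1 : TendstoInMeasure (volume.restrict (Icc (0:ℝ) 2))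
      (fun k => φ (x k)) atTop (0 : ℝ → ℝ) := by
    apply tendstoInMeasure_of_tendsto_ae
    · exact fun k => (hm (x k)).aestronglyMeasurable
    · refine (ae_restrict_iff' measurableSet_Icc).2 (Eventually.of_forall fun u hu => ?_)
      simpa [Function.comp_def] using (hl u hu).comp hx
  have h2 := tendstoInMeasure_iff_dist.1 h1 ε hε
  have h3 : ∀ k, volume.restrict (Icc (0:ℝ) 2) {u | ε ≤ dist (φ (x k) u) ((0:ℝ → ℝ) u)}
      = volume ({u | ε ≤ |φ (x k) u|} ∩ Icc (0:ℝ) 2) := by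
    intro k
    have hset : {u | ε ≤ dist (φ (x k) u) ((0:ℝ → ℝ) u)} = {u | ε ≤ |φ (x k) u|} := by
      ext u; simp [Real.dist_0_eq_abs]
    rw [hset, Measure.restrict_apply (measurableSet_le measurable_const (hm (x k)).abs)]
  simp only [h3] at h2
  exact h2.eventually_lt_const (ENNReal.ofReal_pos.2 hδ)

lemma uct (h : ℝ → ℝ) (hm : Measurable h) (β : ℝ)
    (hlim : ∀ s : ℝ, Tendsto (fun t => h (t + s) - h t) atTop (𝓝 (-(β * s))))
    {ε : ℝ} (hε : 0 < ε) :
    ∀ᶠ t in (atTop : Filter ℝ), ∀ s ∈ Icc (1:ℝ) 2, |h (t + s) - h t + β * s| ≤ ε := by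
  set φ : ℝ → ℝ → ℝ := fun t u => h (t + u) - h t + β * u with hφ
  set ψ : ℝ → ℝ → ℝ := fun τ w => h τ - h (τ - w) + β * w with hψ
  have hmφ : ∀ t, Measurable (φ t) := fun t =>
    (((hm.comp (measurable_const.add measurable_id)).sub measurable_const).add
      (measurable_const.mul measurable_id))
  have hmψ : ∀ τ, Measurable (ψ τ) := fun τ =>
    ((measurable_const.sub (hm.comp (measurable_const.sub measurable_id))).add
      (measurable_const.mul measurable_id))
  have hlφ : ∀ u ∈ Icc (0:ℝ) 2, Tendsto (fun t => φ t u) atTop (𝓝 0) := by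
    intro u _
    have := (hlim u).add_const (β * u)
    simpa using this
  have hlψ : ∀ w ∈ Icc (0:ℝ) 2, Tendsto (fun τ => ψ τ w) atTop (𝓝 0) := by
    intro w _
    have hshift : Tendsto (fun τ : ℝ => τ - w) atTop atTop :=
      tendsto_atTop_add_const_right atTop (-w) tendsto_id
    have h1 : Tendsto (fun τ : ℝ => h τ - h (τ - w)) atTop (𝓝 (-(β * w))) := by
      have := (hlim w).comp hshift
      refine this.congr fun τ => ?_
      simp [Function.comp]
    have := h1.add_const (β * w)
    simpa using this
  have E1 := small_bad φ hmφ hlφ (half_pos hε) (by norm_num : (0:ℝ) < 1/8)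
  have E2 := small_bad ψ hmψ hlψ (half_pos hε) (by norm_num : (0:ℝ) < 1/8)
  obtain ⟨t0, ht0⟩ := eventually_atTop.1 (E1.and E2)
  rw [eventually_atTop]
  refine ⟨t0, fun t ht s hs => ?_⟩
  set τ := t + s with hτ
  have hτ0 : t0 ≤ τ := le_trans ht (by simp [hτ]; linarith [hs.1])
  have hBφ := (ht0 t ht).1
  have hBψ := (ht0 τ hτ0).2
  set A : Set ℝ := Icc 0 s \ {u | ε/2 ≤ |φ t u|} with hA
  set D : Set ℝ := Icc 0 s \ {u | ε/2 ≤ |ψ τ (s - u)|} with hD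
  have hAD : (A ∩ D).Nonempty := by
    by_contra hcon
    rw [Set.not_nonempty_iff_eq_empty] at hcon
    have hmesD : MeasurableSet D :=
      measurableSet_Icc.diff
        (measurableSet_le measurable_const ((hmψ τ).comp (measurable_const.sub measurable_id)).abs)
    have hIccA : volume (Icc (0:ℝ) s) ≤ volume A + ENNReal.ofReal (1/8) := by
      have hsub : Icc (0:ℝ) s ⊆ A ∪ ({u | ε/2 ≤ |φ t u|} ∩ Icc (0:ℝ) 2) := by
        intro u hu
        by_cases hb : ε/2 ≤ |φ t u|
        · exact Or.inr ⟨hb, hu.1, hu.2.trans hs.2⟩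
        · exact Or.inl ⟨hu, hb⟩
      exact le_trans (measure_mono hsub)
        ((measure_union_le _ _).trans (add_le_add_right hBφ.le _))
    have hpre : volume ((fun u => s - u) ⁻¹' ({w | ε/2 ≤ |ψ τ w|} ∩ Icc (0:ℝ) 2))
        = volume ({w | ε/2 ≤ |ψ τ w|} ∩ Icc (0:ℝ) 2) := by
      exact (Measure.measurePreserving_sub_left volume s).measure_preimage
        (((measurableSet_le measurable_const (hmψ τ).abs).inter measurableSet_Icc).nullMeasurableSet)
    have hIccD : volume (Icc (0:ℝ) s) ≤ volume D + ENNReal.ofReal (1/8) := by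
      have hsub : Icc (0:ℝ) s ⊆ D ∪ ((fun u => s - u) ⁻¹' ({w | ε/2 ≤ |ψ τ w|} ∩ Icc (0:ℝ) 2)) := by
        intro u hu
        by_cases hb : ε/2 ≤ |ψ τ (s - u)|
        · exact Or.inr ⟨hb, by simp only [Set.mem_Icc] at hu ⊢; constructor <;> linarith [hs.2]⟩
        · exact Or.inl ⟨hu, hb⟩
      refine le_trans (measure_mono hsub) ((measure_union_le _ _).trans ?_)
      rw [hpre]
      exact add_le_add_right hBψ.le _
    have hdisj : Disjoint A D := Set.disjoint_iff_inter_eq_empty.2 hcon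
    have hsum : volume A + volume D ≤ ENNReal.ofReal s := by
      rw [← measure_union hdisj hmesD]
      have hsub2 : A ∪ D ⊆ Icc (0:ℝ) s := fun u hu => hu.elim (fun h => h.1) (fun h => h.1)
      refine le_trans (measure_mono hsub2) ?_
      rw [Real.volume_Icc]; simp
    have hs' : volume (Icc (0:ℝ) s) = ENNReal.ofReal s := by
      rw [Real.volume_Icc]; simp
    rw [hs'] at hIccA hIccD
    have hchain : ENNReal.ofReal s + ENNReal.ofReal s
        ≤ ENNReal.ofReal s + (ENNReal.ofReal (1/8) + ENNReal.ofReal (1/8)) := by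
      calc ENNReal.ofReal s + ENNReal.ofReal s
          ≤ (volume A + ENNReal.ofReal (1/8)) + (volume D + ENNReal.ofReal (1/8)) :=
            add_le_add hIccA hIccD
        _ = (volume A + volume D) + (ENNReal.ofReal (1/8) + ENNReal.ofReal (1/8)) := by ring
        _ ≤ ENNReal.ofReal s + (ENNReal.ofReal (1/8) + ENNReal.ofReal (1/8)) :=
            add_le_add_left hsum _
    have : ENNReal.ofReal s ≤ ENNReal.ofReal (1/8) + ENNReal.ofReal (1/8) :=
      (ENNReal.add_le_add_iff_left ENNReal.ofReal_ne_top).1 hchain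
    rw [← ENNReal.ofReal_add (by norm_num) (by norm_num)] at this
    have := (ENNReal.ofReal_le_ofReal_iff (by norm_num)).1 this
    linarith [hs.1]
  obtain ⟨u, hu⟩ := hAD
  have hφu : ¬ (ε/2 ≤ |φ t u|) := hu.1.2
  have hψu : ¬ (ε/2 ≤ |ψ τ (s - u)|) := hu.2.2
  rw [not_le] at hφu hψu
  have hkey : h (t + s) - h t + β * s = φ t u + ψ τ (s - u) := by
    simp only [hφ, hψ, hτ]
    have : t + s - (s - u) = t + u := by ring
    rw [this]; ring
  rw [hkey]
  calc |φ t u + ψ τ (s - u)| ≤ |φ t u| + |ψ τ (s - u)| := abs_add_le _ _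
    _ ≤ ε/2 + ε/2 := add_le_add hφu.le hψu.le
    _ = ε := by ring

lemma potter_chain (h : ℝ → ℝ) (β ε t0 : ℝ) (hε : 0 < ε)
    (H : ∀ t, t0 ≤ t → ∀ s ∈ Icc (1:ℝ) 2, |h (t + s) - h t + β * s| ≤ ε) :
    ∀ t, t0 ≤ t → ∀ s, 0 ≤ s → |h (t + s) - h t + β * s| ≤ ε * s + 2 * ε := by
  intro t ht s hs
  by_cases hcase : s < 1
  · have e1 := H t ht (s + 1) ⟨by linarith, by linarith⟩
    have e2 := H (t + s) (by linarith) 1 ⟨le_refl 1, by norm_num⟩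
    have hid : h (t + s) - h t + β * s
        = (h (t + (s + 1)) - h t + β * (s + 1)) - (h ((t + s) + 1) - h (t + s) + β * 1) := by
      rw [show t + (s + 1) = (t + s) + 1 by ring]; ring
    rw [hid]
    have := abs_sub (h (t + (s + 1)) - h t + β * (s + 1)) (h ((t + s) + 1) - h (t + s) + β * 1)
    have hεs : 0 ≤ ε * s := mul_nonneg hε.le hs
    calc |(h (t + (s+1)) - h t + β * (s+1)) - (h ((t+s)+1) - h (t+s) + β * 1)|
        ≤ |h (t + (s+1)) - h t + β * (s+1)| + |h ((t+s)+1) - h (t+s) + β * 1| := abs_sub _ _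
      _ ≤ ε + ε := add_le_add e1 e2
      _ ≤ ε * s + 2 * ε := by linarith
  · push_neg at hcase
    set m : ℕ := ⌊s⌋₊ with hm
    have hm1 : 1 ≤ m := Nat.le_floor (by exact_mod_cast hcase)
    have hm0 : (0:ℝ) < m := by exact_mod_cast Nat.lt_of_lt_of_le Nat.zero_lt_one hm1
    have hmle : (m:ℝ) ≤ s := Nat.floor_le (by linarith)
    have hmlt : s < m + 1 := Nat.lt_floor_add_one s
    set r : ℝ := s / m with hr
    have hr1 : 1 ≤ r := (le_div_iff₀ hm0).2 (by linarith)
    have hr2 : r ≤ 2 := (div_le_iff₀ hm0).2 (by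
      have : (1:ℝ) ≤ (m:ℝ) := by exact_mod_cast hm1
      linarith)
    have claim : ∀ j : ℕ, |h (t + j * r) - h t + β * (j * r)| ≤ j * ε := by
      intro j
      induction j with
      | zero => simp
      | succ j ih =>
        have hjr : (0:ℝ) ≤ j * r := mul_nonneg (Nat.cast_nonneg j) (by linarith)
        have e := H (t + j * r) (by linarith) r ⟨hr1, hr2⟩
        have hid : h (t + ((j:ℕ)+1 : ℕ) * r) - h t + β * (((j:ℕ)+1 : ℕ) * r)
            = (h ((t + j * r) + r) - h (t + j * r) + β * r)
              + (h (t + j * r) - h t + β * (j * r)) := by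
          have harg : t + (((j:ℕ)+1 : ℕ) : ℝ) * r = (t + j * r) + r := by push_cast; ring
          rw [harg]; push_cast; ring
        rw [hid]
        calc |(h ((t + j*r) + r) - h (t + j*r) + β * r) + (h (t + j*r) - h t + β * (j*r))|
            ≤ |h ((t + j*r) + r) - h (t + j*r) + β * r| + |h (t + j*r) - h t + β * (j*r)| :=
              abs_add_le _ _
          _ ≤ ε + j * ε := add_le_add e ih
          _ = (((j:ℕ)+1 : ℕ) : ℝ) * ε := by push_cast; ring
    have hmr : (m:ℝ) * r = s := by
      rw [hr]; field_simp
    have := claim m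
    rw [hmr] at this
    calc |h (t + s) - h t + β * s| ≤ m * ε := this
      _ ≤ ε * s + 2 * ε := by nlinarith
lemma beta_eval (n : ℕ) (hn : 1 ≤ n) (β : ℝ) (hβ1 : -1 < β) :
    (∫ v in (0 : ℝ)..1, v ^ β * (1 - v) ^ (n - 1))
      = Real.Gamma n * Real.Gamma (β + 1) / Real.Gamma (n + β + 1) := by
  set I : ℝ := ∫ v in (0 : ℝ)..1, v ^ β * (1 - v) ^ (n - 1) with hI
  have hcast : ((n - 1 : ℕ) : ℂ) = (n : ℂ) - 1 := by
    push_cast [Nat.cast_sub hn]; ring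
  have hbeta : Complex.betaIntegral (β + 1) n = (I : ℂ) := by
    rw [Complex.betaIntegral, hI, ← intervalIntegral.integral_ofReal]
    apply intervalIntegral.integral_congr
    intro x hx
    rw [Set.uIcc_of_le (by norm_num : (0:ℝ) ≤ 1)] at hx
    have hx0 : 0 ≤ x := hx.1
    have hx1 : x ≤ 1 := hx.2
    have h1 : ((β : ℂ) + 1 - 1) = (β : ℂ) := by ring
    simp only [h1, ← hcast, Complex.cpow_natCast, ← Complex.ofReal_cpow hx0]
    push_cast
    ring
  have hΓ := Complex.Gamma_mul_Gamma_eq_betaIntegral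
    (s := (β : ℂ) + 1) (t := (n : ℂ))
    (by simp only [Complex.add_re, Complex.ofReal_re, Complex.one_re]; linarith)
    (by simp only [Complex.natCast_re]; exact_mod_cast hn)
  rw [hbeta] at hΓ
  have h2 : ((β : ℂ) + 1) = ((β + 1 : ℝ) : ℂ) := by push_cast; ring
  have h3 : ((β : ℂ) + 1 + n) = ((n + β + 1 : ℝ) : ℂ) := by push_cast; ring
  have h4 : ((n : ℂ)) = (((n : ℝ)) : ℂ) := by push_cast; ring
  rw [h3, h2, h4, Complex.Gamma_ofReal, Complex.Gamma_ofReal, Complex.Gamma_ofReal] at hΓ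
  have hΓR : Real.Gamma (β + 1) * Real.Gamma n = Real.Gamma (n + β + 1) * I := by
    exact_mod_cast hΓ
  have hne : Real.Gamma (n + β + 1) ≠ 0 := by
    apply ne_of_gt
    apply Real.Gamma_pos_of_pos
    have : (1:ℝ) ≤ (n:ℝ) := by exact_mod_cast hn
    linarith
  field_simp
  linarith [hΓR]

/-- If `f : (0,∞) → (0,∞)` is measurable, locally integrable on `(0,1]`, and regularly varying
at `0` with index `β ∈ (-1,0]`, then for every integer `n ≥ 1`,
`∫_0^1 f(qv)(1-v)^{n-1} dv / f(q) → ∫_0^1 v^β (1-v)^{n-1} dv = Γ(n)Γ(β+1)/Γ(n+β+1)`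
as `q → 0+`. -/
theorem regular_variation_limit (n : ℕ) (hn : 1 ≤ n) (β : ℝ) (hβ : β ∈ Set.Ioc (-1 : ℝ) 0)
    (f : ℝ → ℝ) (hmeas : Measurable f) (hpos : ∀ x : ℝ, 0 < x → 0 < f x)
    (hloc : LocallyIntegrableOn f (Set.Ioc (0 : ℝ) 1))
    (hrv : ∀ l : ℝ, 0 < l →
      Tendsto (fun q => f (l * q) / f q) (𝓝[>] (0 : ℝ)) (𝓝 (l ^ β))) :
    Tendsto (fun q => (∫ v in (0 : ℝ)..1, f (q * v) * (1 - v) ^ (n - 1)) / f q)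
        (𝓝[>] (0 : ℝ))
        (𝓝 (∫ v in (0 : ℝ)..1, v ^ β * (1 - v) ^ (n - 1))) ∧
      (∫ v in (0 : ℝ)..1, v ^ β * (1 - v) ^ (n - 1))
        = Real.Gamma n * Real.Gamma (β + 1) / Real.Gamma (n + β + 1) := by
  obtain ⟨hβ1, hβ2⟩ := hβ
  refine ⟨?_, beta_eval n hn β hβ1⟩
  set h : ℝ → ℝ := fun t => Real.log (f (Real.exp (-t))) with hh
  have hmh : Measurable h :=
    Real.measurable_log.comp (hmeas.comp (Real.measurable_exp.comp measurable_neg))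
  have hlimh : ∀ s : ℝ, Tendsto (fun t => h (t + s) - h t) atTop (𝓝 (-(β * s))) := by
    intro s
    have hl : (0:ℝ) < Real.exp (-s) := Real.exp_pos _
    have hq : Tendsto (fun t : ℝ => Real.exp (-t)) atTop (𝓝[>] (0:ℝ)) := by
      apply tendsto_nhdsWithin_of_tendsto_nhds_of_eventually_within
      · exact Real.tendsto_exp_atBot.comp tendsto_neg_atTop_atBot
      · exact Eventually.of_forall fun t => Real.exp_pos _
    have h2 := (hrv (Real.exp (-s)) hl).comp hq
    have h3 := ((Real.continuousAt_log
        (ne_of_gt (Real.rpow_pos_of_pos hl β))).tendsto).comp h2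
    have heq : ∀ t : ℝ, Real.log (f (Real.exp (-s) * Real.exp (-t)) / f (Real.exp (-t)))
        = h (t + s) - h t := by
      intro t
      rw [Real.log_div (ne_of_gt (hpos _ (mul_pos hl (Real.exp_pos _))))
        (ne_of_gt (hpos _ (Real.exp_pos _)))]
      simp only [hh]
      rw [show -(t+s) = -s + -t by ring, Real.exp_add]
    have h4 := h3.congr heq
    have hval : Real.log (Real.exp (-s) ^ β) = -(β * s) := by
      rw [Real.log_rpow hl, Real.log_exp]; ring
    rw [hval] at h4
    exact h4
  set ε : ℝ := (β + 1) / 4 with hεdef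
  have hε0 : 0 < ε := by simp only [hεdef]; linarith
  have hγ : -1 < β - ε := by simp only [hεdef]; linarith
  obtain ⟨t0, ht0⟩ := eventually_atTop.1 (uct h hmh β hlimh hε0)
  have hchain := potter_chain h β ε t0 hε0 ht0
  have hPot : ∀ q : ℝ, 0 < q → q ≤ Real.exp (-t0) → ∀ v : ℝ, 0 < v → v ≤ 1 →
      f (q * v) / f q ≤ Real.exp (2*ε) * v ^ (β - ε) := by
    intro q hq hqle v hv hv1
    set t : ℝ := -Real.log q with htdef
    set s : ℝ := -Real.log v with hsdef
    have hts : t0 ≤ t := by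
      have := Real.log_le_log hq hqle
      rw [Real.log_exp] at this
      simp only [htdef]; linarith
    have hs0 : 0 ≤ s := by
      have := Real.log_nonpos hv.le hv1
      simp only [hsdef]; linarith
    have hq' : Real.exp (-t) = q := by
      simp only [htdef, neg_neg]; exact Real.exp_log hq
    have hqv : Real.exp (-(t+s)) = q * v := by
      simp only [htdef, hsdef]
      rw [show -(-Real.log q + -Real.log v) = Real.log q + Real.log v by ring,
        Real.exp_add, Real.exp_log hq, Real.exp_log hv]
    have hb := (abs_le.1 (hchain t hts s hs0)).2
    have hft : h t = Real.log (f q) := by simp only [hh]; rw [hq']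
    have hfts : h (t+s) = Real.log (f (q*v)) := by simp only [hh]; rw [hqv]
    have hfq : f (q*v) / f q = Real.exp (h (t+s) - h t) := by
      rw [hfts, hft, Real.exp_sub, Real.exp_log (hpos _ (mul_pos hq hv)),
        Real.exp_log (hpos _ hq)]
    rw [hfq]
    have hbound : h (t+s) - h t ≤ 2*ε + (-s) * (β - ε) := by linarith
    calc Real.exp (h (t+s) - h t) ≤ Real.exp (2*ε + (-s) * (β - ε)) :=
          Real.exp_le_exp.2 hbound
      _ = Real.exp (2*ε) * v ^ (β - ε) := by
          rw [Real.exp_add, Real.rpow_def_of_pos hv]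
          congr 1
          rw [show Real.log v * (β - ε) = (-s) * (β - ε) by simp only [hsdef]; ring]
  have hrewrite : (fun q => (∫ v in (0:ℝ)..1, f (q * v) * (1 - v) ^ (n - 1)) / f q)
      = fun q => ∫ v in Set.Ioc (0:ℝ) 1, f (q * v) * (1 - v) ^ (n - 1) / f q := by
    funext q
    rw [intervalIntegral.integral_of_le zero_le_one]
    exact (integral_div _ _).symm
  rw [hrewrite, intervalIntegral.integral_of_le zero_le_one]
  apply tendsto_integral_filter_of_dominated_convergence
    (fun v => Real.exp (2*ε) * v ^ (β - ε))
  · refine Eventually.of_forall fun q => ?_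
    exact (((hmeas.comp (measurable_id.const_mul q)).mul
      ((measurable_const.sub measurable_id).pow_const (n-1))).div_const (f q)).aestronglyMeasurable
  · have hmem : Set.Ioc (0:ℝ) (Real.exp (-t0)) ∈ 𝓝[>] (0:ℝ) :=
      Ioc_mem_nhdsGT_of_mem ⟨le_refl 0, Real.exp_pos _⟩
    filter_upwards [hmem] with q hq
    rw [ae_restrict_iff' measurableSet_Ioc]
    refine Eventually.of_forall fun v hv => ?_
    have hfqv : 0 < f (q*v) := hpos _ (mul_pos hq.1 hv.1)
    have hfq : 0 < f q := hpos _ hq.1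
    have hw0 : (0:ℝ) ≤ (1-v)^(n-1) := pow_nonneg (by linarith [hv.2]) _
    have hw1 : (1-v)^(n-1) ≤ 1 := pow_le_one₀ (by linarith [hv.2]) (by linarith [hv.1])
    have hnn : 0 ≤ f (q*v) * (1-v)^(n-1) / f q := by positivity
    rw [Real.norm_eq_abs, abs_of_nonneg hnn]
    calc f (q*v) * (1-v)^(n-1) / f q = (f (q*v) / f q) * (1-v)^(n-1) := by ring
      _ ≤ (Real.exp (2*ε) * v ^ (β - ε)) * 1 := by
          apply mul_le_mul (hPot q hq.1 hq.2 v hv.1 hv.2) hw1 hw0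
          exact mul_nonneg (Real.exp_pos _).le (Real.rpow_nonneg hv.1.le _)
      _ = Real.exp (2*ε) * v ^ (β - ε) := mul_one _
  · exact ((intervalIntegral.intervalIntegrable_rpow' hγ).1).const_mul _
  · rw [ae_restrict_iff' measurableSet_Ioc]
    refine Eventually.of_forall fun v hv => ?_
    have h1 := (hrv v hv.1).mul_const ((1-v)^(n-1))
    refine h1.congr fun q => ?_
    rw [mul_comm v q]; ring
end

section
/- For z ∈ ℂ with Re z > −1 define, for y > 0, u_z(y) := (e^{−zy} − 1 − z(e^{−y} − 1))/(e^y − 1) and v_z(y) := z e^{−y} − u_z(y) = (1 − e^{−zy})/(e^y − 1). Then u_z and v_z extend to bounded continuous functions on [0,∞) (with u_z(0) = 0 and v_z(0) = z). Moreover, there exist constants C_{Re z}, C_{1,Re z}, C_{2,Re z}, ε_{1,Re z}, ε_{2,Re z} > 0, depending only on Re z, such that |v_z(y)| ≤ C_{1,Re z} |z| e^{−ε_{1,Re z} y} for all y ≥ 0, and |v_z(x)| ≤ C_{2,Re z} e^{−ε_{2,Re z} x} for all x ≥ C_{Re z}. -/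
open Complex Set Filter Topology

/-- `u_z(y) = (e^{-zy} - 1 - z(e^{-y}-1))/(e^y - 1)` for `y > 0`, extended by `u_z(0) = 0`. -/
noncomputable def uFun (z : ℂ) (y : ℝ) : ℂ :=
  if y = 0 then 0
  else (Complex.exp (-z * y) - 1 - z * (Complex.exp (-(y : ℂ)) - 1)) / (Complex.exp (y : ℂ) - 1)

/-- `v_z(y) = (1 - e^{-zy})/(e^y - 1)` for `y > 0`, extended by `v_z(0) = z`. -/
noncomputable def vFun (z : ℂ) (y : ℝ) : ℂ :=
  if y = 0 then z else (1 - Complex.exp (-z * y)) / (Complex.exp (y : ℂ) - 1)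

lemma expC_ne_one {y : ℝ} (hy : y ≠ 0) : Complex.exp (y : ℂ) ≠ 1 := by
  rw [← Complex.ofReal_exp, ← Complex.ofReal_one, Ne, Complex.ofReal_inj,
    Real.exp_eq_one_iff]
  exact hy

lemma den_ne {y : ℝ} (hy : y ≠ 0) : Complex.exp (y : ℂ) - 1 ≠ 0 :=
  sub_ne_zero.mpr (expC_ne_one hy)

lemma norm_den {y : ℝ} (hy : 0 ≤ y) : ‖Complex.exp (y : ℂ) - 1‖ = Real.exp y - 1 := by
  rw [← Complex.ofReal_exp, ← Complex.ofReal_one, ← Complex.ofReal_sub, Complex.norm_real]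
  exact abs_of_nonneg (by linarith [Real.one_le_exp hy])

lemma v_eq (z : ℂ) {y : ℝ} (hy : y ≠ 0) :
    vFun z y = z * Complex.exp (-(y : ℂ)) - uFun z y := by
  have hden := den_ne hy
  have hinv : Complex.exp (-(y : ℂ)) * Complex.exp (y : ℂ) = 1 := by
    rw [← Complex.exp_add]; simp
  unfold vFun uFun
  rw [if_neg hy, if_neg hy]
  field_simp
  linear_combination -z * hinv

lemma u_eq (z : ℂ) (y : ℝ) :
    uFun z y = z * Complex.exp (-(y : ℂ)) - vFun z y := by
  rcases eq_or_ne y 0 with rfl | hy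
  · simp [uFun, vFun]
  · have := v_eq z hy; linear_combination this

-- real inequality: |1 - e^{-c}| ≤ |c| e^{max(-c) 0}
lemma real_abs_one_sub_exp_neg (c : ℝ) :
    |1 - Real.exp (-c)| ≤ |c| * Real.exp (max (-c) 0) := by
  rcases le_or_gt 0 c with h | h
  · have h1 : Real.exp (-c) ≤ 1 := Real.exp_le_one_iff.mpr (by linarith)
    have h2 : 1 - c ≤ Real.exp (-c) := by linarith [Real.add_one_le_exp (-c)]
    rw [_root_.abs_of_nonneg (by linarith)]
    have : 1 - Real.exp (-c) ≤ c := by linarith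
    calc 1 - Real.exp (-c) ≤ c := this
      _ = |c| * 1 := by rw [_root_.abs_of_nonneg h, mul_one]
      _ ≤ |c| * Real.exp (max (-c) 0) := by
          apply mul_le_mul_of_nonneg_left _ (abs_nonneg c)
          exact Real.one_le_exp (le_max_right _ _)
  · have h1 : 1 ≤ Real.exp (-c) := Real.one_le_exp (by linarith)
    rw [_root_.abs_of_nonpos (by linarith), neg_sub]
    have h2 : 1 - (-c) ≤ Real.exp (-(-c)) := by linarith [Real.add_one_le_exp (-(-c))]
    -- e^{-c} - 1 ≤ (-c) e^{-c}
    have h3 : Real.exp (-c) - 1 ≤ -c * Real.exp (-c) := by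
      have h4 := mul_le_mul_of_nonneg_right (Real.add_one_le_exp c) (Real.exp_pos (-c)).le
      rw [← Real.exp_add] at h4
      simp only [add_neg_cancel, Real.exp_zero] at h4
      nlinarith
    calc Real.exp (-c) - 1 ≤ -c * Real.exp (-c) := h3
      _ = |c| * Real.exp (-c) := by rw [_root_.abs_of_neg h]
      _ ≤ |c| * Real.exp (max (-c) 0) := by
          apply mul_le_mul_of_nonneg_left _ (abs_nonneg c)
          exact Real.exp_le_exp.mpr (le_max_left _ _)

lemma numer_bound (z : ℂ) {y : ℝ} (hy : 0 ≤ y) :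
    ‖1 - Complex.exp (-z * y)‖ ≤
      3 * ‖z‖ * (y * Real.exp (max (-z.re) 0 * y)) := by
  set r := z.re with hr
  set t := z.im with ht
  set s := max (-r) 0 with hs
  have hsplit : Complex.exp (-z * y) =
      (Real.exp (-(r * y)) : ℂ) * Complex.exp ((-(t * y) : ℝ) * I) := by
    rw [show (-z * (y : ℂ)) = (↑(-(r * y)) : ℂ) + ↑(-(t * y)) * I from by
      apply Complex.ext <;> simp [hr, ht] <;> ring, Complex.exp_add, Complex.ofReal_exp]
  have hw : ‖Complex.exp ((-(t * y) : ℝ) * I) - 1‖ ≤ 2 * |t * y| := by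
    rcases le_or_gt (|t * y|) 1 with h | h
    · have h2 := Complex.norm_exp_sub_one_le (x := ((-(t * y) : ℝ) * I))
        (by simpa [abs_mul] using h)
      simpa [abs_mul] using h2
    · have h1 : ‖Complex.exp ((-(t * y) : ℝ) * I)‖ = 1 := Complex.norm_exp_ofReal_mul_I _
      calc ‖Complex.exp ((-(t * y) : ℝ) * I) - 1‖
          ≤ ‖Complex.exp ((-(t * y) : ℝ) * I)‖ + ‖(1 : ℂ)‖ := norm_sub_le _ _
        _ = 2 := by rw [h1]; norm_num
        _ ≤ 2 * |t * y| := by nlinarith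
  have ha : ‖((Real.exp (-(r * y)) : ℝ) : ℂ)‖ = Real.exp (-(r * y)) := by
    rw [Complex.norm_real]
    exact _root_.abs_of_nonneg (Real.exp_pos _).le
  have hmax : max (-(r * y)) 0 = s * y := by
    rw [hs, max_mul_of_nonneg _ _ hy, neg_mul, zero_mul]
  have hre : |1 - Real.exp (-(r * y))| ≤ |r| * y * Real.exp (s * y) := by
    have := real_abs_one_sub_exp_neg (r * y)
    rw [hmax] at this
    calc |1 - Real.exp (-(r * y))| ≤ |r * y| * Real.exp (s * y) := this
      _ = |r| * y * Real.exp (s * y) := by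
          rw [abs_mul, _root_.abs_of_nonneg hy]
  have haexp : Real.exp (-(r * y)) ≤ Real.exp (s * y) := by
    apply Real.exp_le_exp.mpr
    rw [neg_mul_eq_neg_mul]
    exact mul_le_mul_of_nonneg_right (le_max_left _ _) hy
  have key : ‖1 - Complex.exp (-z * y)‖ ≤
      |1 - Real.exp (-(r * y))| +
        Real.exp (-(r * y)) * ‖Complex.exp ((-(t * y) : ℝ) * I) - 1‖ := by
    rw [hsplit]
    have heq : (1 : ℂ) - (Real.exp (-(r * y)) : ℂ) * Complex.exp ((-(t * y) : ℝ) * I)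
        = (1 - (Real.exp (-(r * y)) : ℂ)) +
          (Real.exp (-(r * y)) : ℂ) * (1 - Complex.exp ((-(t * y) : ℝ) * I)) := by ring
    rw [heq]
    calc ‖_ + _‖ ≤ ‖(1 : ℂ) - (Real.exp (-(r * y)) : ℂ)‖ +
          ‖(Real.exp (-(r * y)) : ℂ) * (1 - Complex.exp ((-(t * y) : ℝ) * I))‖ :=
        norm_add_le _ _
      _ = |1 - Real.exp (-(r * y))| +
          Real.exp (-(r * y)) * ‖Complex.exp ((-(t * y) : ℝ) * I) - 1‖ := by
        have hb : ‖(1 : ℂ) - (Real.exp (-(r * y)) : ℂ)‖ = |1 - Real.exp (-(r * y))| := by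
          rw [← Complex.ofReal_one, ← Complex.ofReal_sub, Complex.norm_real, Real.norm_eq_abs]
        rw [norm_mul, ha, hb, norm_sub_rev]
  have hrz : |r| ≤ ‖z‖ := Complex.abs_re_le_norm z
  have htz : |t| ≤ ‖z‖ := Complex.abs_im_le_norm z
  have hty : |t * y| = |t| * y := by rw [abs_mul, _root_.abs_of_nonneg hy]
  have hexp_pos : (0:ℝ) < Real.exp (s * y) := Real.exp_pos _
  calc ‖1 - Complex.exp (-z * y)‖
      ≤ |1 - Real.exp (-(r * y))| +
        Real.exp (-(r * y)) * ‖Complex.exp ((-(t * y) : ℝ) * I) - 1‖ := key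
    _ ≤ |r| * y * Real.exp (s * y) + Real.exp (s * y) * (2 * (|t| * y)) := by
        apply add_le_add hre
        rw [← hty]
        apply mul_le_mul haexp hw (norm_nonneg _) hexp_pos.le
    _ ≤ 3 * ‖z‖ * (y * Real.exp (s * y)) := by
        nlinarith [mul_nonneg (mul_nonneg (sub_nonneg.mpr hrz) hy) hexp_pos.le,
          mul_nonneg (mul_nonneg (sub_nonneg.mpr htz) hy) hexp_pos.le,
          mul_nonneg hy hexp_pos.le, norm_nonneg z]

lemma decay_bound {s : ℝ} (hs0 : 0 ≤ s) (hs1 : s < 1) {y : ℝ} (hy : 0 ≤ y) :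
    y * Real.exp (s * y) ≤
      (1 / (1 - s)) * (Real.exp (-((1 - s) / 2) * y) * (Real.exp y - 1)) := by
  set ε := (1 - s) / 2 with hε
  have hεpos : 0 < ε := by rw [hε]; linarith
  have hsinh : 2 * (ε * y) ≤ Real.exp (ε * y) - Real.exp (-(ε * y)) := by
    have h1 : ε * y ≤ Real.sinh (ε * y) := by
      rcases eq_or_lt_of_le (mul_nonneg hεpos.le hy) with h | h
      · rw [← h]; simp
      · exact (Real.self_lt_sinh_iff.mpr h).le
    rw [Real.sinh_eq] at h1
    linarith
  -- multiply by e^{s y} > 0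
  have h2 := mul_le_mul_of_nonneg_right hsinh (Real.exp_pos (s * y)).le
  rw [sub_mul, ← Real.exp_add, ← Real.exp_add] at h2
  -- exponents: ε y + s y = (1-ε) y ;  -(ε y) + s y = (s - ε) y
  have he1 : ε * y + s * y = (1 - ε) * y := by rw [hε]; ring
  have he2 : -(ε * y) + s * y = (s - ε) * y := by ring
  rw [he1, he2] at h2
  have h3 : Real.exp (-ε * y) ≤ Real.exp ((s - ε) * y) := by
    apply Real.exp_le_exp.mpr
    apply mul_le_mul_of_nonneg_right _ hy
    linarith
  have h4 : 2 * ε * (y * Real.exp (s * y)) ≤ Real.exp ((1 - ε) * y) - Real.exp (-ε * y) := by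
    calc 2 * ε * (y * Real.exp (s * y)) = 2 * (ε * y) * Real.exp (s * y) := by ring
      _ ≤ Real.exp ((1 - ε) * y) - Real.exp ((s - ε) * y) := h2
      _ ≤ Real.exp ((1 - ε) * y) - Real.exp (-ε * y) := by linarith
  have h5 : Real.exp ((1 - ε) * y) - Real.exp (-ε * y)
      = Real.exp (-ε * y) * (Real.exp y - 1) := by
    rw [mul_sub, ← Real.exp_add, mul_one]
    ring_nf
  rw [h5] at h4
  have h6 : (1 : ℝ) / (1 - s) = 1 / (2 * ε) := by rw [hε]; ring_nf
  have h7 : (1 / (2 * ε)) * (Real.exp (-ε * y) * (Real.exp y - 1))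
      = (Real.exp (-ε * y) * (Real.exp y - 1)) / (2 * ε) := by ring
  rw [h6, h7, le_div_iff₀ (by positivity)]
  nlinarith [h4]

lemma vFun_zero (z : ℂ) : vFun z 0 = z := by simp [vFun]

lemma norm_vFun_pos (z : ℂ) {y : ℝ} (hy : 0 < y) :
    ‖vFun z y‖ = ‖1 - Complex.exp (-z * y)‖ / (Real.exp y - 1) := by
  rw [vFun, if_neg hy.ne', norm_div, norm_den hy.le]

lemma bound_one {z : ℂ} {s : ℝ} (hs : s = max (-z.re) 0) (hs1 : s < 1) {y : ℝ}
    (hy : 0 ≤ y) : ‖vFun z y‖ ≤ (3 / (1 - s)) * ‖z‖ * Real.exp (-((1 - s) / 2) * y) := by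
  have hs0 : 0 ≤ s := hs ▸ le_max_right _ _
  rcases eq_or_lt_of_le hy with h | h
  · rw [← h, vFun_zero]
    have h1 : (1:ℝ) ≤ 3 / (1 - s) := by
      rw [le_div_iff₀ (by linarith)]; linarith
    have : Real.exp (-((1 - s) / 2) * 0) = 1 := by norm_num
    rw [this, mul_one]
    nlinarith [norm_nonneg z]
  · have hden : (0:ℝ) < Real.exp y - 1 := by
      have := Real.add_one_le_exp y; nlinarith [Real.exp_pos y, Real.exp_lt_exp.mpr h]
    rw [norm_vFun_pos z h, div_le_iff₀ hden]
    calc ‖1 - Complex.exp (-z * y)‖ ≤ 3 * ‖z‖ * (y * Real.exp (s * y)) := by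
          rw [hs]; exact numer_bound z hy
      _ ≤ 3 * ‖z‖ * ((1 / (1 - s)) * (Real.exp (-((1 - s) / 2) * y) * (Real.exp y - 1))) := by
          apply mul_le_mul_of_nonneg_left (decay_bound hs0 hs1 hy)
          positivity
      _ = 3 / (1 - s) * ‖z‖ * Real.exp (-((1 - s) / 2) * y) * (Real.exp y - 1) := by ring

lemma bound_two {z : ℂ} {r : ℝ} (hr : z.re = r) (hr1 : -1 < r) {x : ℝ} (hx : 1 ≤ x) :
    ‖vFun z x‖ ≤ 4 * Real.exp (-(min 1 (1 + r) / 2) * x) := by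
  have hx0 : (0:ℝ) < x := by linarith
  have hεle1 : min 1 (1 + r) / 2 ≤ 1 := by
    have := min_le_left (1:ℝ) (1 + r); linarith
  have hεle2 : min 1 (1 + r) / 2 ≤ 1 + r := by
    have h1 := min_le_right (1:ℝ) (1 + r); linarith [min_le_left (1:ℝ) (1+r)]
  set ε := min 1 (1 + r) / 2 with hε
  have hnum : ‖1 - Complex.exp (-z * x)‖ ≤ 1 + Real.exp (-r * x) := by
    calc ‖1 - Complex.exp (-z * x)‖ ≤ ‖(1:ℂ)‖ + ‖Complex.exp (-z * x)‖ := norm_sub_le _ _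
      _ = 1 + Real.exp (-r * x) := by
          rw [Complex.norm_exp]
          simp [hr]
  have hden : Real.exp x / 2 ≤ Real.exp x - 1 := by
    have h2 : (2:ℝ) ≤ Real.exp x := by
      calc (2:ℝ) ≤ Real.exp 1 := by
            have := Real.add_one_le_exp 1; linarith
        _ ≤ Real.exp x := Real.exp_le_exp.mpr hx
    linarith
  have hdenpos : (0:ℝ) < Real.exp x - 1 := by
    nlinarith [Real.exp_pos x]
  rw [norm_vFun_pos z hx0, div_le_iff₀ hdenpos]
  have h1 : Real.exp (-x) ≤ Real.exp (-ε * x) :=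
    Real.exp_le_exp.mpr (by nlinarith)
  have h2 : Real.exp (-(1 + r) * x) ≤ Real.exp (-ε * x) :=
    Real.exp_le_exp.mpr (by nlinarith)
  calc ‖1 - Complex.exp (-z * x)‖ ≤ 1 + Real.exp (-r * x) := hnum
    _ ≤ 2 * Real.exp (-ε * x) * Real.exp x := by
        have e1 : Real.exp (-x) * Real.exp x = 1 := by
          rw [← Real.exp_add]; simp
        have e2 : Real.exp (-(1 + r) * x) * Real.exp x = Real.exp (-r * x) := by
          rw [← Real.exp_add]; ring_nf
        nlinarith [Real.exp_pos x, Real.exp_pos (-ε * x)]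
    _ ≤ 4 * Real.exp (-ε * x) * (Real.exp x - 1) := by
        nlinarith [Real.exp_pos (-ε * x), hden, Real.exp_pos x]

lemma tendsto_vFun_zero (z : ℂ) : Tendsto (vFun z) (𝓝[>] (0:ℝ)) (𝓝 z) := by
  have h1 : HasDerivAt (fun y : ℝ => -Complex.exp (-z * y)) z 0 := by
    have hc : HasDerivAt (fun w : ℂ => Complex.exp (-z * w)) (-z) 0 := by
      simpa using ((hasDerivAt_id (0:ℂ)).const_mul (-z)).cexp
    have h2 : HasDerivAt (fun y : ℝ => Complex.exp (-z * y)) (-z) 0 := by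
      simpa using hc.comp_ofReal
    simpa only [neg_neg] using h2.fun_neg
  have h2 : HasDerivAt (fun y : ℝ => Complex.exp (y : ℂ)) 1 0 := by
    have := (Complex.hasDerivAt_exp 0).comp_ofReal
    simpa using this
  have hs1 := hasDerivAt_iff_tendsto_slope.mp h1
  have hs2 := hasDerivAt_iff_tendsto_slope.mp h2
  have hprod : Tendsto (fun y : ℝ =>
      slope (fun y : ℝ => -Complex.exp (-z * y)) 0 y *
        (slope (fun y : ℝ => Complex.exp (y : ℂ)) 0 y)⁻¹) (𝓝[≠] (0:ℝ)) (𝓝 z) := by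
    have := hs1.mul (hs2.inv₀ one_ne_zero)
    simpa using this
  have hmono : 𝓝[>] (0:ℝ)  ≤ 𝓝[≠] (0:ℝ) :=
    nhdsWithin_mono _ (fun x hx => ne_of_gt hx)
  refine Tendsto.congr' ?_ (hprod.mono_left hmono)
  filter_upwards [self_mem_nhdsWithin] with y (hy : 0 < y)
  have hyne : y ≠ 0 := hy.ne'
  have hden := den_ne hyne
  have hyC : (y : ℂ) ≠ 0 := by exact_mod_cast hyne
  rw [vFun, if_neg hyne, slope_def_module, slope_def_module]
  simp only [sub_zero, Complex.real_smul, Complex.ofReal_inv, Complex.ofReal_zero, mul_zero, neg_zero, Complex.exp_zero]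
  rw [mul_inv, inv_inv]
  field_simp
  ring

lemma contOn_vFun (z : ℂ) : ContinuousOn (vFun z) (Ici 0) := by
  intro y₀ hy₀
  rcases eq_or_lt_of_le (mem_Ici.mp hy₀ : (0:ℝ) ≤ y₀) with h | h
  · subst h
    unfold ContinuousWithinAt
    rw [vFun_zero]
    have hsplit : 𝓝[Ici (0:ℝ)] 0 = 𝓝[Ioi (0:ℝ)] 0 ⊔ pure 0 := by
      rw [← Set.Ioi_union_left, nhdsWithin_union, nhdsWithin_singleton]
    rw [hsplit, Filter.tendsto_sup]
    refine ⟨tendsto_vFun_zero z, ?_⟩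
    have := tendsto_pure_nhds (vFun z) 0
    rwa [vFun_zero] at this
  · apply ContinuousAt.continuousWithinAt
    have hev : (fun y : ℝ => (1 - Complex.exp (-z * y)) / (Complex.exp (y : ℂ) - 1))
        =ᶠ[𝓝 y₀] vFun z := by
      filter_upwards [Ioi_mem_nhds h] with y hy
      rw [vFun, if_neg (ne_of_gt hy)]
    have hca : ContinuousAt
        (fun y : ℝ => (1 - Complex.exp (-z * y)) / (Complex.exp (y : ℂ) - 1)) y₀ := by
      apply ContinuousAt.div
      · fun_prop
      · fun_prop
      · exact den_ne (ne_of_gt h)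
    exact hca.congr hev

lemma contOn_uFun (z : ℂ) : ContinuousOn (uFun z) (Ici 0) := by
  have heq : uFun z = fun y : ℝ => z * Complex.exp (-(y : ℂ)) - vFun z y := funext (u_eq z)
  rw [heq]
  apply ContinuousOn.sub _ (contOn_vFun z)
  apply Continuous.continuousOn
  fun_prop

/-- For `Re z > -1`, the functions `u_z` and `v_z = z e^{-y} - u_z` are bounded and continuous
on `[0,∞)`, and there are constants depending only on `Re z` such that
`|v_z(y)| ≤ C₁ |z| e^{-ε₁ y}` for all `y ≥ 0` and `|v_z(x)| ≤ C₂ e^{-ε₂ x}` for `x ≥ C`. -/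
theorem uFun_vFun_bounds :
    (∀ z : ℂ, -1 < z.re →
      (∀ y : ℝ, 0 < y → vFun z y = z * Complex.exp (-(y : ℂ)) - uFun z y) ∧
      ContinuousOn (uFun z) (Set.Ici (0 : ℝ)) ∧
      ContinuousOn (vFun z) (Set.Ici (0 : ℝ)) ∧
      (∃ M : ℝ, ∀ y ∈ Set.Ici (0 : ℝ), ‖uFun z y‖ ≤ M) ∧
      (∃ M : ℝ, ∀ y ∈ Set.Ici (0 : ℝ), ‖vFun z y‖ ≤ M)) ∧
    (∀ r : ℝ, -1 < r →
      ∃ C C₁ C₂ ε₁ ε₂ : ℝ, 0 < C ∧ 0 < C₁ ∧ 0 < C₂ ∧ 0 < ε₁ ∧ 0 < ε₂ ∧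
        ∀ z : ℂ, z.re = r →
          (∀ y : ℝ, 0 ≤ y → ‖vFun z y‖ ≤ C₁ * ‖z‖ * Real.exp (-ε₁ * y)) ∧
          (∀ x : ℝ, C ≤ x → ‖vFun z x‖ ≤ C₂ * Real.exp (-ε₂ * x))) := by
  constructor
  · intro z hz
    set s := max (-z.re) 0 with hs
    have hs1 : s < 1 := max_lt (by linarith) one_pos
    have hs0 : 0 ≤ s := le_max_right _ _
    have hCpos : (0:ℝ) < 3 / (1 - s) := div_pos (by norm_num) (by linarith)
    have hv : ∀ y ∈ Set.Ici (0:ℝ), ‖vFun z y‖ ≤ 3 / (1 - s) * ‖z‖ := by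
      intro y hy
      have hb := bound_one hs hs1 (hy : (0:ℝ) ≤ y)
      have hexp : Real.exp (-((1 - s) / 2) * y) ≤ 1 := by
        apply Real.exp_le_one_iff.mpr
        have : (0:ℝ) ≤ (1 - s) / 2 * y := by
          apply mul_nonneg (by linarith) hy
        linarith
      nlinarith [norm_nonneg z, mul_nonneg hCpos.le (norm_nonneg z)]
    refine ⟨fun y hy => v_eq z hy.ne', contOn_uFun z, contOn_vFun z,
      ⟨‖z‖ + 3 / (1 - s) * ‖z‖, ?_⟩, ⟨3 / (1 - s) * ‖z‖, hv⟩⟩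
    intro y hy
    rw [u_eq]
    have h1 : ‖z * Complex.exp (-(y : ℂ))‖ ≤ ‖z‖ := by
      rw [norm_mul]
      have : ‖Complex.exp (-(y : ℂ))‖ = Real.exp (-y) := by
        rw [Complex.norm_exp]
        simp
      rw [this]
      have h2 : Real.exp (-y) ≤ 1 := Real.exp_le_one_iff.mpr (by linarith [mem_Ici.mp hy])
      nlinarith [norm_nonneg z, Real.exp_pos (-y)]
    calc ‖z * Complex.exp (-(y : ℂ)) - vFun z y‖
        ≤ ‖z * Complex.exp (-(y : ℂ))‖ + ‖vFun z y‖ := norm_sub_le _ _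
      _ ≤ ‖z‖ + 3 / (1 - s) * ‖z‖ := add_le_add h1 (hv y hy)
  · intro r hr
    set s := max (-r) 0 with hs
    have hs1 : s < 1 := max_lt (by linarith) one_pos
    have hs0 : 0 ≤ s := le_max_right _ _
    refine ⟨1, 3 / (1 - s), 4, (1 - s) / 2, min 1 (1 + r) / 2,
      one_pos, div_pos (by norm_num) (by linarith), by norm_num, by linarith, ?_, ?_⟩
    · have : (0:ℝ) < min 1 (1 + r) := lt_min one_pos (by linarith)
      linarith
    · intro z hz
      constructor
      · intro y hy
        exact bound_one (by rw [hz]) hs1 hy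
      · intro x hx
        exact bound_two hz hr hx
end
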